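/- Let R be a commutative ring, α ∈ R[X], and k a natural number. Let B and C be commutative rings, ψ : R[X] → B a surjective ring homomorphism whose kernel is the principal ideal (α), ρ : B → C a surjective ring homomorphism, and σ : C → B an injective additive map satisfying σ(ρ(b)·c) = b·σ(c) for all b ∈ B and c ∈ C, and σ(1) = ψ(X)^k. Then the kernel of the composite ρ∘ψ is the ideal quotient ((α) : (X^k)) = {f ∈ R[X] : f·X^k ∈ (α)}, and hence ρ∘ψ induces a ring isomorphism R[X]/((α) : (X^k)) ≅ C. -/

import Mathlib

open Polynomial

theorem stmt_4 {R B C : Type*} [CommRing R] [CommRing B] [CommRing C]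
    (α : R[X]) (k : ℕ)
    (ψ : R[X] →+* B) (hψsurj : Function.Surjective ψ)
    (hψker : RingHom.ker ψ = Ideal.span {α})
    (ρ : B →+* C) (hρsurj : Function.Surjective ρ)
    (σ : C →+ B) (hσinj : Function.Injective σ)
    (hproj : ∀ (b : B) (c : C), σ (ρ b * c) = b * σ c)
    (hσ1 : σ 1 = ψ X ^ k) :
    RingHom.ker (ρ.comp ψ) = (Ideal.span {α}).colon (Ideal.span {X ^ k} : Ideal R[X]) ∧
      ∃ θ : (R[X] ⧸ (Ideal.span {α}).colon (Ideal.span {X ^ k} : Ideal R[X])) ≃+* C,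
        ∀ f : R[X],
          θ (Ideal.Quotient.mk ((Ideal.span {α}).colon (Ideal.span {X ^ k} : Ideal R[X])) f) = ρ (ψ f) := by
  have hker : RingHom.ker (ρ.comp ψ) = (Ideal.span {α}).colon (Ideal.span {X ^ k} : Ideal R[X]) := by
    ext f
    rw [Ideal.mem_colon_span_singleton, RingHom.mem_ker, RingHom.comp_apply, ← hψker,
      RingHom.mem_ker]
    constructor
    · intro h
      have := hproj (ψ f) 1
      rw [h, zero_mul, map_zero, hσ1] at this
      rw [map_mul, map_pow, ← this]
    · intro h
      have h2 : σ (ρ (ψ f) * 1) = σ 0 := by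
        rw [hproj, hσ1, map_zero, ← map_pow, ← map_mul, h]
      have := hσinj h2
      rwa [mul_one] at this
  refine ⟨hker, ?_⟩
  have hsurj : Function.Surjective (ρ.comp ψ) := hρsurj.comp hψsurj
  refine ⟨(Ideal.quotEquivOfEq hker.symm).trans
    (RingHom.quotientKerEquivOfSurjective hsurj), fun f => ?_⟩
  rfl
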